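/- Let K be a finite simplicial complex on vertex set V that is d-representable, i.e., there exist convex sets C_i ⊆ ℝ^d (i ∈ V) whose nerve is K. Define a map f from the geometric realization of the dual complex K' to ℝ^d by sending each vertex of K' (a facet J of K) to a chosen point p_J ∈ ⋂_{i∈J} C_i and extending affinely on simplices. Then f is faithful: for every I ⊆ V, if ⋂_{i∈I} f(|Cont_i|) ≠ ∅ then I is a face of K. -/
import Mathlib


open scoped BigOperators

noncomputable section

variable {V : Type*} [Fintype V] [DecidableEq V]

def IsComplex (K : Finset (Finset V)) : Prop :=
  ∅ ∈ K ∧ (∀ v : V, {v} ∈ K) ∧ ∀ F ∈ K, ∀ G ⊆ F, G ∈ K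

def facets (K : Finset (Finset V)) : Finset (Finset V) :=
  K.filter fun J => ∀ J' ∈ K, J ⊆ J' → J = J'

def contV (K : Finset (Finset V)) (i : V) : Finset (Finset V) :=
  (facets K).filter fun J => i ∈ J

def dual (K : Finset (Finset V)) : Finset (Finset (Finset V)) :=
  (facets K).powerset.filter fun α => (α.inf id).Nonempty

def geomFace {W : Type*} [Fintype W] (F : Finset W) : Set (W → ℝ) :=
  {x | (∀ w, 0 ≤ x w) ∧ (∑ w, x w) = 1 ∧ ∀ w, x w ≠ 0 → w ∈ F}

def geom {W : Type*} [Fintype W] (L : Finset (Finset W)) : Set (W → ℝ) :=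
  ⋃ F ∈ L, geomFace F

def supp {W : Type*} [Fintype W] [DecidableEq W] (x : W → ℝ) : Finset W :=
  Finset.univ.filter fun w => x w ≠ 0

def Faithful {d : ℕ} (K : Finset (Finset V))
    (f : (Finset V → ℝ) → EuclideanSpace ℝ (Fin d)) : Prop :=
  ∀ I : Finset V, (⋂ i ∈ I, f '' geomFace (contV K i)).Nonempty → I ∈ K

def affExt {W : Type*} [Fintype W] {E : Type*} [AddCommGroup E] [Module ℝ E]
    (p : W → E) (x : W → ℝ) : E := ∑ w, x w • p w

def Hhat (K : Finset (Finset V)) : Set ((Finset V → ℝ) × (Finset V → ℝ)) :=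
  {z | z.1 ∈ geom (dual K) ∧ z.2 ∈ geom (dual K) ∧
    ((supp z.1).inf id ∪ (supp z.2).inf id) ∉ K}

def Matousek (d : ℕ) (K : Finset (Finset V)) : Prop :=
  ∃ g : Hhat K → EuclideanSpace ℝ (Fin d),
    Continuous g ∧ (∀ z, ‖g z‖ = 1) ∧
    ∀ (x y : Finset V → ℝ) (hxy : (x, y) ∈ Hhat K) (hyx : (y, x) ∈ Hhat K),
      g ⟨(y, x), hyx⟩ = - g ⟨(x, y), hxy⟩

def Representable (d : ℕ) (K : Finset (Finset V)) : Prop :=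
  ∃ C : V → Set (EuclideanSpace ℝ (Fin d)),
    (∀ i, Convex ℝ (C i)) ∧ ∀ I : Finset V, I ∈ K ↔ (⋂ i ∈ I, C i).Nonempty

def dimOf {W : Type*} [Fintype W] [DecidableEq W] (L : Finset (Finset W)) : ℕ :=
  (L.sup Finset.card) - 1

/-- the affine extension of points chosen in the intersections over
facets of a convex representation is a faithful map. -/
theorem stmt3 {d : ℕ} (K : Finset (Finset V)) (hK : IsComplex K)
    (C : V → Set (EuclideanSpace ℝ (Fin d))) (hconv : ∀ i, Convex ℝ (C i))
    (hnerve : ∀ I : Finset V, I ∈ K ↔ (⋂ i ∈ I, C i).Nonempty)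
    (p : Finset V → EuclideanSpace ℝ (Fin d))
    (hp : ∀ J ∈ facets K, p J ∈ ⋂ i ∈ J, C i) :
    Faithful K (affExt p) := by
  intro I hI
  obtain ⟨q, hq⟩ := hI
  rw [hnerve]
  refine ⟨q, ?_⟩
  simp only [Set.mem_iInter] at hq ⊢
  intro i hi
  obtain ⟨x, ⟨hx0, hx1, hxs⟩, hqx⟩ := hq i hi
  rw [← hqx]
  show ∑ J, x J • p J ∈ C i
  have hvanish : ∀ J ∈ Finset.univ, J ∉ Finset.univ.filter (fun J => x J ≠ 0) →
      x J • p J = 0 := by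
    intro J _ hJ
    simp only [Finset.mem_filter, Finset.mem_univ, true_and, not_not] at hJ
    simp [hJ]
  rw [← Finset.sum_subset (Finset.filter_subset _ _) hvanish]
  have hsum : ∑ J ∈ Finset.univ.filter (fun J => x J ≠ 0), x J = 1 := by
    rw [Finset.sum_subset (Finset.filter_subset _ _)
      (by intro J _ hJ
          simp only [Finset.mem_filter, Finset.mem_univ, true_and, not_not] at hJ
          exact hJ)]
    exact hx1
  refine (hconv i).sum_mem (fun J _ => hx0 J) hsum ?_
  intro J hJ
  simp only [Finset.mem_filter, Finset.mem_univ, true_and] at hJ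
  have hJc : J ∈ contV K i := hxs J hJ
  simp only [contV, Finset.mem_filter] at hJc
  have := hp J hJc.1
  simp only [Set.mem_iInter] at this
  exact this i hJc.2
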